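/- In a countably additive Popper space, the strict order on ∼-equivalence classes of conditioning events, defined by [U] < [V] iff U ≤ V and not V ≤ U, is well-founded: there is no infinite strictly decreasing sequence [U₀] > [U₁] > [U₂] > …. -/

import Mathlib

/-- A countably additive Popper space over `(W, F)`: `F` is a σ-algebra of subsets of `W`,
`F'` ⊆ `F` does not contain `∅`, is closed under supersets in `F`, satisfies the regularity
condition that `μ(V | U) ≠ 0` with `U ∈ F'` implies `V ∩ U ∈ F'`, and `μ` satisfies CP1–CP3
and is countably additive in its first argument. -/
structure Popper {W : Type*} (F F' : Set (Set W)) (μ : Set W → Set W → ℝ) : Prop where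
  univ_mem : Set.univ ∈ F
  compl_mem : ∀ ⦃U⦄, U ∈ F → Uᶜ ∈ F
  iUnion_mem : ∀ s : ℕ → Set W, (∀ n, s n ∈ F) → (⋃ n, s n) ∈ F
  subset : F' ⊆ F
  empty_not_mem : (∅ : Set W) ∉ F'
  superset_closed : ∀ ⦃U V⦄, U ∈ F' → U ⊆ V → V ∈ F → V ∈ F'
  cond_closed : ∀ ⦃U V⦄, U ∈ F' → V ∈ F → μ V U ≠ 0 → V ∩ U ∈ F'
  nonneg : ∀ V ∈ F, ∀ U ∈ F', 0 ≤ μ V U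
  le_one : ∀ V ∈ F, ∀ U ∈ F', μ V U ≤ 1
  cp1 : ∀ U ∈ F', μ U U = 1
  cp2 : ∀ V₁ ∈ F, ∀ V₂ ∈ F, ∀ U ∈ F', Disjoint V₁ V₂ → μ (V₁ ∪ V₂) U = μ V₁ U + μ V₂ U
  cp3 : ∀ V ∈ F, ∀ X ∈ F', ∀ U ∈ F', V ⊆ X → X ⊆ U → μ V U = μ V X * μ X U
  countably_additive : ∀ V : ℕ → Set W, (∀ n, V n ∈ F) → Pairwise (Function.onFun Disjoint V) →
    ∀ U ∈ F', HasSum (fun n => μ (V n) U) (μ (⋃ n, V n) U)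

/-- The relation `U ≤ V` defined by `μ(U | U ∪ V) > 0`. -/
def leRel {W : Type*} (μ : Set W → Set W → ℝ) (U V : Set W) : Prop :=
  0 < μ U (U ∪ V)

/-- `U ∼ V` iff `U ≤ V` and `V ≤ U`. -/
def simRel {W : Type*} (μ : Set W → Set W → ℝ) (U V : Set W) : Prop :=
  leRel μ U V ∧ leRel μ V U

/-- In a countably additive Popper space, the strict order on `∼`-equivalence classes of
conditioning events, `[U] < [V]` iff `U ≤ V` and not `V ≤ U`, is well-founded: there is no
infinite strictly decreasing sequence `[U₀] > [U₁] > [U₂] > …`. -/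
theorem stmt6 {W : Type*} {F F' : Set (Set W)} {μ : Set W → Set W → ℝ}
    (h : Popper F F' μ) :
    ¬ ∃ U : ℕ → Set W, (∀ n, U n ∈ F') ∧
      ∀ n, leRel μ (U (n + 1)) (U n) ∧ ¬ leRel μ (U n) (U (n + 1)) := by
  rintro ⟨U, hU, hdec⟩
  classical
  have hUF : ∀ n, U n ∈ F := fun n => h.subset (hU n)
  have hempty : (∅ : Set W) ∈ F := by
    have := h.compl_mem h.univ_mem; simpa using this
  have hFunion : ∀ {A B : Set W}, A ∈ F → B ∈ F → A ∪ B ∈ F := by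
    intro A B hA hB
    have := h.iUnion_mem (fun n => if n = 0 then A else B)
      (fun n => by by_cases hn : n = 0 <;> simp [hn, hA, hB])
    convert this using 1
    ext x; constructor
    · rintro (hx | hx)
      · exact Set.mem_iUnion.2 ⟨0, by simpa⟩
      · exact Set.mem_iUnion.2 ⟨1, by simpa⟩
    · rintro hx
      rcases Set.mem_iUnion.1 hx with ⟨n, hn⟩
      by_cases h0 : n = 0
      · left; simpa [h0] using hn
      · right; simpa [h0] using hn
  have hFinter : ∀ {A B : Set W}, A ∈ F → B ∈ F → A ∩ B ∈ F := by
    intro A B hA hB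
    have := h.compl_mem (hFunion (h.compl_mem hA) (h.compl_mem hB))
    simpa [Set.compl_union] using this
  set S := ⋃ n, U n with hS
  have hSF : S ∈ F := h.iUnion_mem _ hUF
  have hSF' : S ∈ F' := h.superset_closed (hU 0) (Set.subset_iUnion U 0) hSF
  have hXF : ∀ n, U n ∪ U (n + 1) ∈ F := fun n => hFunion (hUF n) (hUF (n + 1))
  have hXF' : ∀ n, U n ∪ U (n + 1) ∈ F' := fun n =>
    h.superset_closed (hU n) Set.subset_union_left (hXF n)
  have hXS : ∀ n, U n ∪ U (n + 1) ⊆ S := fun n =>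
    Set.union_subset (Set.subset_iUnion U n) (Set.subset_iUnion U (n + 1))
  -- μ (U n | U n ∪ U (n+1)) = 0
  have hzero : ∀ n, μ (U n) (U n ∪ U (n + 1)) = 0 := by
    intro n
    have h2 := (hdec n).2
    unfold leRel at h2
    have h3 := h.nonneg _ (hUF n) _ (hXF' n)
    have h4 := not_lt.1 h2
    linarith
  -- μ (U n | S) = 0
  have hUzero : ∀ n, μ (U n) S = 0 := by
    intro n
    rw [h.cp3 (U n) (hUF n) _ (hXF' n) S hSF' Set.subset_union_left (hXS n), hzero n, zero_mul]
  -- monotonicity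
  have hmono : ∀ {A B : Set W}, A ∈ F → B ∈ F → A ⊆ B → μ A S ≤ μ B S := by
    intro A B hA hB hAB
    have hd : B = A ∪ (B ∩ Aᶜ) := by
      ext x; constructor
      · intro hx; by_cases hxA : x ∈ A
        · exact Or.inl hxA
        · exact Or.inr ⟨hx, hxA⟩
      · rintro (hx | ⟨hx, _⟩)
        · exact hAB hx
        · exact hx
    have hdisj : Disjoint A (B ∩ Aᶜ) := by
      rw [Set.disjoint_iff_inter_eq_empty]; ext x
      simp only [Set.mem_inter_iff, Set.mem_compl_iff, Set.mem_empty_iff_false, iff_false]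
      tauto
    have heq : μ B S = μ A S + μ (B ∩ Aᶜ) S := by
      conv_lhs => rw [hd]
      exact h.cp2 A hA _ (hFinter hB (h.compl_mem hA)) S hSF' hdisj
    linarith [h.nonneg _ (hFinter hB (h.compl_mem hA)) S hSF']
  -- disjointed sets are in F
  have hbiUnion : ∀ n : ℕ, (⋃ i, ⋃ _ : i < n, U i) ∈ F := by
    intro n
    have := h.iUnion_mem (fun i => if i < n then U i else ∅)
      (fun i => by by_cases hi : i < n <;> simp [hi, hUF i, hempty])
    convert this using 1
    ext x; simp only [Set.mem_iUnion]
    constructor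
    · rintro ⟨i, hi, hx⟩; exact ⟨i, by simp [hi, hx]⟩
    · rintro ⟨i, hx⟩
      by_cases hi : i < n
      · exact ⟨i, hi, by simpa [hi] using hx⟩
      · simp [hi] at hx
  have hTF : ∀ n, disjointed U n ∈ F := by
    intro n
    rw [disjointed_eq_inter_compl]
    have : (⋂ i < n, (U i)ᶜ) = (⋃ i, ⋃ _ : i < n, U i)ᶜ := by
      simp [Set.compl_iUnion]
    rw [this]
    exact hFinter (hUF n) (h.compl_mem (hbiUnion n))
  have hTzero : ∀ n, μ (disjointed U n) S = 0 := by
    intro n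
    have h1 := hmono (hTF n) (hUF n) (disjointed_subset U n)
    have h2 := h.nonneg _ (hTF n) S hSF'
    rw [hUzero n] at h1
    linarith
  have hsum := h.countably_additive (disjointed U) hTF (disjoint_disjointed U) S hSF'
  rw [iUnion_disjointed, ← hS] at hsum
  rw [h.cp1 S hSF'] at hsum
  have : HasSum (fun n : ℕ => μ (disjointed U n) S) 0 := by
    convert hasSum_zero with n; exact hTzero n
  have := hsum.unique this
  norm_num at this
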